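/- (Inter-agent collision avoidance with distinct knot vectors, Proposition 2.) Let z¹ and z² be B-spline curves of order d with control points p^1_0,…,p^1_n and p^2_0,…,p^2_n, defined over strictly increasing knot vectors τ_0 < … < τ_m and σ_0 < … < σ_m respectively (n = m − d). Suppose that for every pair of indices (i_1, i_2) with d − 1 ≤ i_1, i_2 ≤ n such that the intervals [τ_{i_1}, τ_{i_1+1}] and [σ_{i_2}, σ_{i_2+1}] intersect, there exists a vector c ∈ ℝ^q with ⟨c, p^1_{j_1}⟩ < ⟨c, p^2_{j_2}⟩ for all j_1 with i_1 − d + 1 ≤ j_1 ≤ i_1 and all j_2 with i_2 − d + 1 ≤ j_2 ≤ i_2. Then z¹(t) ≠ z²(t) for every t with max(τ_{d−1}, σ_{d−1}) ≤ t < min(τ_{n+1}, σ_{n+1}). -/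

import Mathlib

/-- Cox–de Boor B-spline basis function `B_{i,d}(t)` of order `d` for the knot
vector `τ`.  In Lean, division by zero yields zero, which matches the standard
convention that any term of the recursion whose denominator vanishes is taken
to be zero. -/
noncomputable def bspline (τ : ℕ → ℝ) : ℕ → ℕ → ℝ → ℝ
  | 0, _, _ => 0
  | 1, i, t => if τ i ≤ t ∧ t < τ (i + 1) then 1 else 0
  | d + 2, i, t =>
      (t - τ i) / (τ (i + d + 1) - τ i) * bspline τ (d + 1) i t
      + (τ (i + d + 2) - t) / (τ (i + d + 2) - τ (i + 1)) * bspline τ (d + 1) (i + 1) t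
lemma tau_mono_le (τ : ℕ → ℝ) {lo hi a b : ℕ}
    (h : ∀ j, lo ≤ j → j < hi → τ j ≤ τ (j + 1))
    (ha : lo ≤ a) (hab : a ≤ b) (hb : b ≤ hi) : τ a ≤ τ b := by
  induction b with
  | zero =>
    rw [show a = 0 from by omega]
  | succ n ih =>
    rcases Nat.lt_or_ge a (n + 1) with h1 | h1
    · exact le_trans (ih (by omega) (by omega)) (h n (by omega) (by omega))
    · rw [show a = n + 1 from by omega]

lemma tau_mono_lt (τ : ℕ → ℝ) {lo hi a b : ℕ}
    (h : ∀ j, lo ≤ j → j < hi → τ j < τ (j + 1))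
    (ha : lo ≤ a) (hab : a < b) (hb : b ≤ hi) : τ a < τ b := by
  induction b with
  | zero => omega
  | succ n ih =>
    rcases Nat.lt_or_ge a n with h1 | h1
    · exact lt_trans (ih h1 (by omega)) (h n (by omega) (by omega))
    · have : a = n := by omega
      subst this
      exact h a (by omega) (by omega)

lemma bspline_support (τ : ℕ → ℝ) :
    ∀ d i t, (∀ k, i ≤ k → k < i + d → τ k ≤ τ (k + 1)) →
      bspline τ d i t ≠ 0 → τ i ≤ t ∧ t < τ (i + d) := by
  intro d
  induction d using Nat.twoStepInduction with
  | zero => intro i t _ h; simp [bspline] at h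
  | one =>
    intro i t _ h
    simp only [bspline] at h
    by_cases hc : τ i ≤ t ∧ t < τ (i + 1)
    · exact hc
    · simp [hc] at h
  | more d ih1 ih2 =>
    intro i t hmono h
    have hrec : bspline τ (d + 2) i t =
        (t - τ i) / (τ (i + d + 1) - τ i) * bspline τ (d + 1) i t
        + (τ (i + d + 2) - t) / (τ (i + d + 2) - τ (i + 1)) * bspline τ (d + 1) (i + 1) t := rfl
    rw [hrec] at h
    have hm1 : ∀ k, i ≤ k → k < i + (d + 1) → τ k ≤ τ (k + 1) :=
      fun k hk1 hk2 => hmono k hk1 (by omega)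
    have hm2 : ∀ k, i + 1 ≤ k → k < (i + 1) + (d + 1) → τ k ≤ τ (k + 1) :=
      fun k hk1 hk2 => hmono k (by omega) (by omega)
    have key : bspline τ (d + 1) i t ≠ 0 ∨ bspline τ (d + 1) (i + 1) t ≠ 0 := by
      by_contra hc
      push_neg at hc
      rw [hc.1, hc.2] at h
      simp at h
    rcases key with k1 | k2
    · obtain ⟨h1, h2⟩ := ih2 i t hm1 k1
      refine ⟨h1, lt_of_lt_of_le h2 ?_⟩
      have e1 : i + (d + 1) = i + d + 1 := by omega
      have e2 : i + (d + 2) = i + d + 1 + 1 := by omega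
      rw [e1, e2]
      exact hmono (i + d + 1) (by omega) (by omega)
    · obtain ⟨h1, h2⟩ := ih2 (i + 1) t hm2 k2
      constructor
      · exact le_trans (hmono i (le_refl i) (by omega)) h1
      · have e : i + (d + 2) = i + 1 + (d + 1) := by omega
        rw [e]
        exact h2

lemma bspline_nonneg (τ : ℕ → ℝ) :
    ∀ d i t, (∀ k, i ≤ k → k < i + d → τ k ≤ τ (k + 1)) → 0 ≤ bspline τ d i t := by
  intro d
  induction d using Nat.twoStepInduction with
  | zero => intro i t _; simp [bspline]
  | one =>
    intro i t _
    simp only [bspline]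
    split <;> norm_num
  | more d ih1 ih2 =>
    intro i t hmono
    have hrec : bspline τ (d + 2) i t =
        (t - τ i) / (τ (i + d + 1) - τ i) * bspline τ (d + 1) i t
        + (τ (i + d + 2) - t) / (τ (i + d + 2) - τ (i + 1)) * bspline τ (d + 1) (i + 1) t := rfl
    rw [hrec]
    have hm1 : ∀ k, i ≤ k → k < i + (d + 1) → τ k ≤ τ (k + 1) :=
      fun k hk1 hk2 => hmono k hk1 (by omega)
    have hm2 : ∀ k, i + 1 ≤ k → k < (i + 1) + (d + 1) → τ k ≤ τ (k + 1) :=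
      fun k hk1 hk2 => hmono k (by omega) (by omega)
    have denom1 : 0 ≤ τ (i + d + 1) - τ i :=
      sub_nonneg.2 (tau_mono_le τ hmono (le_refl i) (by omega) (by omega))
    have denom2 : 0 ≤ τ (i + d + 2) - τ (i + 1) :=
      sub_nonneg.2 (tau_mono_le τ hmono (by omega) (by omega) (by omega))
    apply add_nonneg
    · by_cases hz : bspline τ (d + 1) i t = 0
      · rw [hz]; simp
      · have hs := bspline_support τ (d + 1) i t hm1 hz
        exact mul_nonneg (div_nonneg (sub_nonneg.2 hs.1) denom1) (ih2 i t hm1)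
    · by_cases hz : bspline τ (d + 1) (i + 1) t = 0
      · rw [hz]; simp
      · have hs := bspline_support τ (d + 1) (i + 1) t hm2 hz
        have ht : t ≤ τ (i + d + 2) := by
          have e : i + 1 + (d + 1) = i + d + 2 := by omega
          rw [← e]
          exact le_of_lt hs.2
        exact mul_nonneg (div_nonneg (sub_nonneg.2 ht) denom2) (ih2 (i + 1) t hm2)

lemma bspline_partition (τ : ℕ → ℝ) (t : ℝ) :
    ∀ d, 1 ≤ d → ∀ i, d ≤ i + 1 →
      (∀ k, i + 1 - d ≤ k → k < i + d → τ k < τ (k + 1)) →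
      τ i ≤ t → t < τ (i + 1) →
      ∑ k ∈ Finset.range d, bspline τ d (i + 1 - d + k) t = 1 := by
  intro d hd
  induction d, hd using Nat.le_induction with
  | base =>
    intro i hi hmono h1 h2
    rw [Finset.sum_range_one, show i + 1 - 1 + 0 = i from by omega]
    simp only [bspline]
    rw [if_pos ⟨h1, h2⟩]
  | succ n hn ih =>
    intro i hi hmono h1 h2
    obtain ⟨e, rfl⟩ : ∃ e, n = e + 1 := ⟨n - 1, by omega⟩
    obtain ⟨r, rfl⟩ : ∃ r, i = r + (e + 1) := ⟨i - (e + 1), by omega⟩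
    have hidx : ∀ k : ℕ, r + (e + 1) + 1 - (e + 1 + 1) + k = r + k := by omega
    have hrec : ∀ j, bspline τ (e + 2) j t =
        (t - τ j) / (τ (j + e + 1) - τ j) * bspline τ (e + 1) j t
        + (τ (j + e + 2) - t) / (τ (j + e + 2) - τ (j + 1)) * bspline τ (e + 1) (j + 1) t :=
      fun j => rfl
    have hmono' : ∀ k, r ≤ k → k < r + (e + 1) → τ k ≤ τ (k + 1) := by
      intro k hk1 hk2
      exact le_of_lt (hmono k (by omega) (by omega))
    have hB0 : bspline τ (e + 1) r t = 0 := by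
      by_contra hz
      have hs := bspline_support τ (e + 1) r t hmono' hz
      have : t < τ (r + (e + 1)) := hs.2
      linarith
    have hmtop : ∀ k, r + e + 2 ≤ k → k < r + e + 2 + (e + 1) → τ k ≤ τ (k + 1) := by
      intro k hk1 hk2
      exact le_of_lt (hmono k (by omega) (by omega))
    have hBtop : bspline τ (e + 1) (r + e + 2) t = 0 := by
      by_contra hz
      have hs := bspline_support τ (e + 1) (r + e + 2) t hmtop hz
      have h' : τ (r + (e + 1) + 1) ≤ t := by
        have e' : r + (e + 1) + 1 = r + e + 2 := by omega
        rw [e']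
        exact hs.1
      linarith
    show ∑ k ∈ Finset.range (e + 1 + 1), bspline τ (e + 1 + 1) (r + (e + 1) + 1 - (e + 1 + 1) + k) t = 1
    simp only [hidx]
    have hrec2 : ∀ k : ℕ, bspline τ (e + 1 + 1) (r + k) t =
        (t - τ (r + k)) / (τ (r + k + e + 1) - τ (r + k)) * bspline τ (e + 1) (r + k) t
        + (τ (r + k + e + 2) - t) / (τ (r + k + e + 2) - τ (r + k + 1)) * bspline τ (e + 1) (r + k + 1) t :=
      fun k => hrec (r + k)
    rw [Finset.sum_congr rfl (fun k _ => hrec2 k), Finset.sum_add_distrib]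
    have hS1 : ∑ k ∈ Finset.range (e + 2),
          (t - τ (r + k)) / (τ (r + k + e + 1) - τ (r + k)) * bspline τ (e + 1) (r + k) t
        = ∑ k ∈ Finset.range (e + 1),
          (t - τ (r + (k + 1))) / (τ (r + (k + 1) + e + 1) - τ (r + (k + 1))) * bspline τ (e + 1) (r + (k + 1)) t := by
      rw [Finset.sum_range_succ']
      simp [hB0]
    have hS2 : ∑ k ∈ Finset.range (e + 2),
          (τ (r + k + e + 2) - t) / (τ (r + k + e + 2) - τ (r + k + 1)) * bspline τ (e + 1) (r + k + 1) t
        = ∑ k ∈ Finset.range (e + 1),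
          (τ (r + k + e + 2) - t) / (τ (r + k + e + 2) - τ (r + k + 1)) * bspline τ (e + 1) (r + k + 1) t := by
      rw [Finset.sum_range_succ]
      have e' : r + (e + 1) + 1 = r + e + 2 := by omega
      simp [e', hBtop]
    rw [hS1, hS2, ← Finset.sum_add_distrib]
    have key : ∀ k ∈ Finset.range (e + 1),
        (t - τ (r + (k + 1))) / (τ (r + (k + 1) + e + 1) - τ (r + (k + 1))) * bspline τ (e + 1) (r + (k + 1)) t
        + (τ (r + k + e + 2) - t) / (τ (r + k + e + 2) - τ (r + k + 1)) * bspline τ (e + 1) (r + k + 1) t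
        = bspline τ (e + 1) (r + k + 1) t := by
      intro k hk
      rw [Finset.mem_range] at hk
      have e1 : r + (k + 1) = r + k + 1 := by omega
      have e2 : r + k + 1 + e + 1 = r + k + e + 2 := by omega
      rw [e1, e2]
      have hlt : τ (r + k + 1) < τ (r + k + e + 2) :=
        tau_mono_lt τ hmono (by omega) (by omega) (by omega)
      have hne : τ (r + k + e + 2) - τ (r + k + 1) ≠ 0 := by
        intro hcon; linarith [sub_eq_zero.1 hcon]
      rw [← add_mul, ← add_div]
      have hnum : t - τ (r + k + 1) + (τ (r + k + e + 2) - t) = τ (r + k + e + 2) - τ (r + k + 1) := by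
        ring
      rw [hnum, div_self hne, one_mul]
    rw [Finset.sum_congr rfl key]
    have hih := ih (r + (e + 1)) (by omega)
      (fun k hk1 hk2 => hmono k (by omega) (by omega)) h1 h2
    have hidx2 : ∀ k : ℕ, r + (e + 1) + 1 - (e + 1) + k = r + k + 1 := by omega
    simp only [hidx2] at hih
    exact hih

open scoped RealInnerProductSpace

/-- Proposition 2: inter-agent collision avoidance for two
B-spline curves over distinct knot vectors `τ` and `σ` (here `n = m - d`).
Separation is required for every pair of windows whose knot intervals
overlap in time. -/
theorem bspline_interagent_avoidance (q m d : ℕ) (τ σ : ℕ → ℝ)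
    (hτ : ∀ j, j < m → τ j < τ (j + 1))
    (hσ : ∀ j, j < m → σ j < σ (j + 1))
    (hd : 1 ≤ d) (hdm : d ≤ m)
    (p1 p2 : ℕ → EuclideanSpace ℝ (Fin q))
    (hsep : ∀ i1 i2, d - 1 ≤ i1 → i1 ≤ m - d → d - 1 ≤ i2 → i2 ≤ m - d →
      (Set.Icc (τ i1) (τ (i1 + 1)) ∩ Set.Icc (σ i2) (σ (i2 + 1))).Nonempty →
      ∃ c : EuclideanSpace ℝ (Fin q),
        ∀ j1 j2, i1 - (d - 1) ≤ j1 → j1 ≤ i1 → i2 - (d - 1) ≤ j2 → j2 ≤ i2 →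
          ⟪c, p1 j1⟫ < ⟪c, p2 j2⟫)
    (t : ℝ) (ht1 : max (τ (d - 1)) (σ (d - 1)) ≤ t)
    (ht2 : t < min (τ (m - d + 1)) (σ (m - d + 1))) :
    (∑ j ∈ Finset.range (m - d + 1), bspline τ d j t • p1 j) ≠
      (∑ j ∈ Finset.range (m - d + 1), bspline σ d j t • p2 j) := by
  classical
  have hτle : ∀ {a b : ℕ}, a ≤ b → b ≤ m → τ a ≤ τ b := fun {a b} hab hb =>
    tau_mono_le τ (lo := 0) (hi := m) (fun j _ hj => le_of_lt (hτ j hj)) (Nat.zero_le a) hab hb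
  have hσle : ∀ {a b : ℕ}, a ≤ b → b ≤ m → σ a ≤ σ b := fun {a b} hab hb =>
    tau_mono_le σ (lo := 0) (hi := m) (fun j _ hj => le_of_lt (hσ j hj)) (Nat.zero_le a) hab hb
  have hτd1 : τ (d - 1) ≤ t := le_trans (le_max_left _ _) ht1
  have hσd1 : σ (d - 1) ≤ t := le_trans (le_max_right _ _) ht1
  have hτtop : t < τ (m - d + 1) := lt_of_lt_of_le ht2 (min_le_left _ _)
  have hσtop : t < σ (m - d + 1) := lt_of_lt_of_le ht2 (min_le_right _ _)
  have hdn : d - 1 ≤ m - d := by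
    by_contra hcon
    push_neg at hcon
    have h3 : τ (m - d + 1) ≤ τ (d - 1) := hτle (by omega) (by omega)
    linarith
  -- locate the knot interval of t for τ
  set i1 := Nat.findGreatest (fun j => τ j ≤ t) (m - d) with hi1def
  have hi1a : d - 1 ≤ i1 := Nat.le_findGreatest hdn hτd1
  have hi1b : i1 ≤ m - d := Nat.findGreatest_le _
  have hτi1 : τ i1 ≤ t := Nat.findGreatest_spec (P := fun j => τ j ≤ t) hdn hτd1
  have hτi1' : t < τ (i1 + 1) := by
    rcases Nat.lt_or_ge i1 (m - d) with hlt | hge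
    · by_contra hcon
      push_neg at hcon
      exact Nat.findGreatest_is_greatest (Nat.lt_succ_self i1) (by omega) hcon
    · rw [show i1 + 1 = m - d + 1 from by omega]
      exact hτtop
  -- locate the knot interval of t for σ
  set i2 := Nat.findGreatest (fun j => σ j ≤ t) (m - d) with hi2def
  have hi2a : d - 1 ≤ i2 := Nat.le_findGreatest hdn hσd1
  have hi2b : i2 ≤ m - d := Nat.findGreatest_le _
  have hσi2 : σ i2 ≤ t := Nat.findGreatest_spec (P := fun j => σ j ≤ t) hdn hσd1
  have hσi2' : t < σ (i2 + 1) := by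
    rcases Nat.lt_or_ge i2 (m - d) with hlt | hge
    · by_contra hcon
      push_neg at hcon
      exact Nat.findGreatest_is_greatest (Nat.lt_succ_self i2) (by omega) hcon
    · rw [show i2 + 1 = m - d + 1 from by omega]
      exact hσtop
  obtain ⟨c, hc⟩ := hsep i1 i2 hi1a hi1b hi2a hi2b
    ⟨t, ⟨⟨hτi1, le_of_lt hτi1'⟩, ⟨hσi2, le_of_lt hσi2'⟩⟩⟩
  -- window suprema / infima
  have hW1ne : (Finset.Icc (i1 - (d - 1)) i1).Nonempty := ⟨i1, Finset.mem_Icc.2 ⟨by omega, le_refl _⟩⟩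
  have hW2ne : (Finset.Icc (i2 - (d - 1)) i2).Nonempty := ⟨i2, Finset.mem_Icc.2 ⟨by omega, le_refl _⟩⟩
  set M1 := (Finset.Icc (i1 - (d - 1)) i1).sup' hW1ne (fun j => ⟪c, p1 j⟫) with hM1
  set M2 := (Finset.Icc (i2 - (d - 1)) i2).inf' hW2ne (fun j => ⟪c, p2 j⟫) with hM2
  have hM1M2 : M1 < M2 := by
    obtain ⟨j1, hj1, hj1e⟩ := Finset.exists_mem_eq_sup' hW1ne (fun j => ⟪c, p1 j⟫)
    obtain ⟨j2, hj2, hj2e⟩ := Finset.exists_mem_eq_inf' hW2ne (fun j => ⟪c, p2 j⟫)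
    rw [Finset.mem_Icc] at hj1 hj2
    rw [hM1, hM2, hj1e, hj2e]
    exact hc j1 j2 hj1.1 hj1.2 hj2.1 hj2.2
  -- support of the basis functions
  have hsup1 : ∀ j, j < m - d + 1 → bspline τ d j t ≠ 0 → i1 - (d - 1) ≤ j ∧ j ≤ i1 := by
    intro j hj hz
    have hm : ∀ k, j ≤ k → k < j + d → τ k ≤ τ (k + 1) :=
      fun k hk1 hk2 => le_of_lt (hτ k (by omega))
    obtain ⟨hs1, hs2⟩ := bspline_support τ d j t hm hz
    constructor
    · by_contra hcon
      push_neg at hcon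
      have : τ (j + d) ≤ τ i1 := hτle (by omega) (by omega)
      linarith
    · by_contra hcon
      push_neg at hcon
      have : τ (i1 + 1) ≤ τ j := hτle (by omega) (by omega)
      linarith
  have hsup2 : ∀ j, j < m - d + 1 → bspline σ d j t ≠ 0 → i2 - (d - 1) ≤ j ∧ j ≤ i2 := by
    intro j hj hz
    have hm : ∀ k, j ≤ k → k < j + d → σ k ≤ σ (k + 1) :=
      fun k hk1 hk2 => le_of_lt (hσ k (by omega))
    obtain ⟨hs1, hs2⟩ := bspline_support σ d j t hm hz
    constructor
    · by_contra hcon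
      push_neg at hcon
      have : σ (j + d) ≤ σ i2 := hσle (by omega) (by omega)
      linarith
    · by_contra hcon
      push_neg at hcon
      have : σ (i2 + 1) ≤ σ j := hσle (by omega) (by omega)
      linarith
  have hnn1 : ∀ j ∈ Finset.range (m - d + 1), 0 ≤ bspline τ d j t := by
    intro j hj
    rw [Finset.mem_range] at hj
    exact bspline_nonneg τ d j t (fun k hk1 hk2 => le_of_lt (hτ k (by omega)))
  have hnn2 : ∀ j ∈ Finset.range (m - d + 1), 0 ≤ bspline σ d j t := by
    intro j hj
    rw [Finset.mem_range] at hj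
    exact bspline_nonneg σ d j t (fun k hk1 hk2 => le_of_lt (hσ k (by omega)))
  -- partition of unity over the full range
  have hpart1 : ∑ j ∈ Finset.range (m - d + 1), bspline τ d j t = 1 := by
    have hp := bspline_partition τ t d hd i1 (by omega)
      (fun k hk1 hk2 => hτ k (by omega)) hτi1 hτi1'
    have h1 : ∑ j ∈ Finset.Icc (i1 + 1 - d) i1, bspline τ d j t
        = ∑ j ∈ Finset.range (m - d + 1), bspline τ d j t := by
      apply Finset.sum_subset
      · intro j hj
        rw [Finset.mem_Icc] at hj
        rw [Finset.mem_range]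
        omega
      · intro j hj hnotin
        rw [Finset.mem_range] at hj
        rw [Finset.mem_Icc] at hnotin
        by_contra hz
        obtain ⟨hs1, hs2⟩ := hsup1 j hj hz
        omega
    rw [← h1, ← Finset.Ico_add_one_right_eq_Icc, Finset.sum_Ico_eq_sum_range,
      show i1 + 1 - (i1 + 1 - d) = d from by omega]
    exact hp
  have hpart2 : ∑ j ∈ Finset.range (m - d + 1), bspline σ d j t = 1 := by
    have hp := bspline_partition σ t d hd i2 (by omega)
      (fun k hk1 hk2 => hσ k (by omega)) hσi2 hσi2'
    have h1 : ∑ j ∈ Finset.Icc (i2 + 1 - d) i2, bspline σ d j t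
        = ∑ j ∈ Finset.range (m - d + 1), bspline σ d j t := by
      apply Finset.sum_subset
      · intro j hj
        rw [Finset.mem_Icc] at hj
        rw [Finset.mem_range]
        omega
      · intro j hj hnotin
        rw [Finset.mem_range] at hj
        rw [Finset.mem_Icc] at hnotin
        by_contra hz
        obtain ⟨hs1, hs2⟩ := hsup2 j hj hz
        omega
    rw [← h1, ← Finset.Ico_add_one_right_eq_Icc, Finset.sum_Ico_eq_sum_range,
      show i2 + 1 - (i2 + 1 - d) = d from by omega]
    exact hp
  -- the separating inequalities
  have hL : ⟪c, ∑ j ∈ Finset.range (m - d + 1), bspline τ d j t • p1 j⟫ ≤ M1 := by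
    rw [inner_sum]
    have hterm : ∀ j ∈ Finset.range (m - d + 1),
        ⟪c, bspline τ d j t • p1 j⟫ ≤ bspline τ d j t * M1 := by
      intro j hj
      rw [real_inner_smul_right]
      by_cases hz : bspline τ d j t = 0
      · rw [hz]; simp
      · rw [Finset.mem_range] at hj
        obtain ⟨h1, h2⟩ := hsup1 j hj hz
        exact mul_le_mul_of_nonneg_left
          (Finset.le_sup' (fun j => ⟪c, p1 j⟫) (Finset.mem_Icc.2 ⟨h1, h2⟩))
          (hnn1 j (Finset.mem_range.2 hj))
    calc ∑ j ∈ Finset.range (m - d + 1), ⟪c, bspline τ d j t • p1 j⟫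
        ≤ ∑ j ∈ Finset.range (m - d + 1), bspline τ d j t * M1 := Finset.sum_le_sum hterm
      _ = (∑ j ∈ Finset.range (m - d + 1), bspline τ d j t) * M1 := by rw [← Finset.sum_mul]
      _ = M1 := by rw [hpart1, one_mul]
  have hR : M2 ≤ ⟪c, ∑ j ∈ Finset.range (m - d + 1), bspline σ d j t • p2 j⟫ := by
    rw [inner_sum]
    have hterm : ∀ j ∈ Finset.range (m - d + 1),
        bspline σ d j t * M2 ≤ ⟪c, bspline σ d j t • p2 j⟫ := by
      intro j hj
      rw [real_inner_smul_right]
      by_cases hz : bspline σ d j t = 0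
      · rw [hz]; simp
      · rw [Finset.mem_range] at hj
        obtain ⟨h1, h2⟩ := hsup2 j hj hz
        exact mul_le_mul_of_nonneg_left
          (Finset.inf'_le (fun j => ⟪c, p2 j⟫) (Finset.mem_Icc.2 ⟨h1, h2⟩))
          (hnn2 j (Finset.mem_range.2 hj))
    calc M2 = (∑ j ∈ Finset.range (m - d + 1), bspline σ d j t) * M2 := by rw [hpart2, one_mul]
      _ = ∑ j ∈ Finset.range (m - d + 1), bspline σ d j t * M2 := Finset.sum_mul _ _ _
      _ ≤ ∑ j ∈ Finset.range (m - d + 1), ⟪c, bspline σ d j t • p2 j⟫ := Finset.sum_le_sum hterm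
  intro heq
  rw [heq] at hL
  linarith
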